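/- For f(z₁,z₂) = z₁² − z₂² − 1, the imaginary projection is 𝓘(f) = {(y₁,y₂) ∈ ℝ² : −1 ≤ y₁² − y₂² < 0} ∪ {(0,0)}. -/

import Mathlib

theorem imagProj_hyperbola :
    {p : ℝ × ℝ | ∃ z₁ z₂ : ℂ, z₁ ^ 2 - z₂ ^ 2 - 1 = 0 ∧ z₁.im = p.1 ∧ z₂.im = p.2}
      = {p : ℝ × ℝ | -1 ≤ p.1 ^ 2 - p.2 ^ 2 ∧ p.1 ^ 2 - p.2 ^ 2 < 0}
          ∪ {((0 : ℝ), (0 : ℝ))} := by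
  ext p
  obtain ⟨y₁, y₂⟩ := p
  simp only [Set.mem_setOf_eq, Set.mem_union, Set.mem_singleton_iff, Prod.mk.injEq]
  constructor
  · rintro ⟨z₁, z₂, hf, h1, h2⟩
    subst h1; subst h2
    rw [Complex.ext_iff] at hf
    obtain ⟨hre, him⟩ := hf
    simp [pow_two, Complex.mul_re, Complex.mul_im] at hre him
    set a := z₁.re; set b := z₁.im; set c := z₂.re; set d := z₂.im
    by_cases h0 : b = 0 ∧ d = 0
    · right; exact h0
    · left
      constructor
      · nlinarith [hre, him, sq_nonneg (a*b - c*d), sq_nonneg (a*d - c*b), sq_nonneg (a*d + c*b), sq_nonneg a, sq_nonneg b, sq_nonneg c, sq_nonneg d, sq_nonneg (a*b)]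
      · by_cases hd : d = 0
        · exfalso
          rw [hd] at him hre
          have hb : b ≠ 0 := by tauto
          have ha : a = 0 := by
            rcases mul_eq_zero.mp (by linarith [him] : a * b = 0) with h | h
            · exact h
            · exact absurd h hb
          rw [ha] at hre
          nlinarith [sq_nonneg b, sq_nonneg c]
        · by_cases hb : b = 0
          · rw [hb]
            have : 0 < d^2 := by positivity
            linarith
          · have hb2 : 0 < b^2 := by positivity
            have hd2 : 0 < d^2 := by positivity
            have h2 : a * b = c * d := by linarith
            have hsq : a^2 * b^2 = c^2 * d^2 := by
              have := congrArg (fun x => x * x) h2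
              nlinarith [this]
            nlinarith [hre, hsq, hb2, hd2, sq_nonneg a, sq_nonneg c]
  · rintro (⟨hge, hlt⟩ | ⟨h1, h2⟩)
    · have hden : 0 < y₂^2 - y₁^2 := by nlinarith
      have hd : y₂ ≠ 0 := by
        intro h; rw [h] at hden; nlinarith [sq_nonneg y₁]
      set t : ℝ := (1 + y₁^2 - y₂^2) * y₂^2 / (y₂^2 - y₁^2) with ht
      have htnn : 0 ≤ t := by
        apply div_nonneg
        · nlinarith [sq_nonneg y₂]
        · linarith
      set a := Real.sqrt t with hadef
      have ha2 : a^2 = t := Real.sq_sqrt htnn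
      have key : a^2 * (y₂^2 - y₁^2) = (1 + y₁^2 - y₂^2) * y₂^2 := by
        rw [ha2, ht]; field_simp
      refine ⟨⟨a, y₁⟩, ⟨a * y₁ / y₂, y₂⟩, ?_, rfl, rfl⟩
      rw [Complex.ext_iff]
      constructor
      · simp only [pow_two, Complex.mul_re, Complex.mul_im, Complex.sub_re, Complex.one_re,
          Complex.sub_im, Complex.one_im, Complex.zero_re, Complex.zero_im]
        field_simp
        nlinarith [key, sq_nonneg y₂]
      · simp only [pow_two, Complex.mul_re, Complex.mul_im, Complex.sub_re, Complex.one_re,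
          Complex.sub_im, Complex.one_im, Complex.zero_re, Complex.zero_im]
        field_simp
        ring
    · subst h1; subst h2
      exact ⟨1, 0, by norm_num, rfl, rfl⟩
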